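/- Let m ≥ 3 be odd and let d be an integer with gcd(d, 2^m - 1) = 1 such that the power function x ↦ x^d on F = GF(2^m) is maximum nonlinear. Assume that for all α, β ∈ F \ {0} with α ≠ β and all i, j ∈ GF(2) the cardinality |H^{i,j}(α,β) ∩ D_d| belongs to {2^(m-3), 2^(m-3) - 2^((m-3)/2), 2^(m-3) + 2^((m-3)/2)}. Then tr(y^d + (y+1)^d + 1) = 0 for all y ∈ F. -/

import Mathlib

attribute [local instance] Classical.propDecidable

noncomputable instance (m : ℕ) : Fintype (GaloisField 2 m) := Fintype.ofFinite _

/-- The absolute trace map from `GF(2^m)` to `GF(2)`. -/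
noncomputable def tr (m : ℕ) (x : GaloisField 2 m) : ZMod 2 :=
  Algebra.trace (ZMod 2) (GaloisField 2 m) x

/-- `(-1)^t` as an integer, for `t ∈ GF(2)`. -/
def chi (t : ZMod 2) : ℤ := (-1) ^ t.val

/-- The Walsh coefficient `∑_{x ∈ F} (-1)^(tr(γx + βx^d))` of the power map `x ↦ x^d`. -/
noncomputable def walsh (m d : ℕ) (β γ : GaloisField 2 m) : ℤ :=
  ∑ x : GaloisField 2 m, chi (tr m (γ * x + β * x ^ d))

/-- The power function `x ↦ x^d` on `GF(2^m)` is maximum nonlinear (almost bent). -/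
def MaxNonlinear (m d : ℕ) : Prop :=
  ∀ β : GaloisField 2 m, β ≠ 0 → ∀ γ : GaloisField 2 m,
    walsh m d β γ ∈ ({0, 2 ^ ((m + 1) / 2), -(2 ^ ((m + 1) / 2))} : Set ℤ)

/-- `D_d = {x ∈ F : tr(x^d) = 1}`. -/
noncomputable def Dd (m d : ℕ) : Finset (GaloisField 2 m) :=
  Finset.univ.filter (fun x => tr m (x ^ d) = 1)

/-- `H^i(α) = {x ∈ F : tr(αx) = i}`. -/
noncomputable def Hi (m : ℕ) (α : GaloisField 2 m) (i : ZMod 2) :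
    Finset (GaloisField 2 m) :=
  Finset.univ.filter (fun x => tr m (α * x) = i)

/-- `H^{i,j}(α,β) = {x ∈ F : tr(αx) = i and tr(βx) = j}`. -/
noncomputable def Hij (m : ℕ) (α β : GaloisField 2 m) (i j : ZMod 2) :
    Finset (GaloisField 2 m) :=
  Finset.univ.filter (fun x => tr m (α * x) = i ∧ tr m (β * x) = j)

open Finset

variable {m : ℕ}

lemma zmod2_cases (t : ZMod 2) : t = 0 ∨ t = 1 := by revert t; decide
lemma chi_add : ∀ s t : ZMod 2, chi (s + t) = chi s * chi t := by decide
lemma chi_zero : chi 0 = 1 := rfl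
lemma chi_one : chi 1 = -1 := rfl
lemma chi_cases : ∀ t : ZMod 2, chi t = 1 ∨ chi t = -1 := by decide
lemma chi_eq_neg_one : ∀ t : ZMod 2, chi t = -1 → t = 1 := by decide
lemma chi_of_ne_zero : ∀ t : ZMod 2, t ≠ 0 → chi t = -1 := by decide

lemma tr_add (a b : GaloisField 2 m) : tr m (a + b) = tr m a + tr m b :=
  map_add (Algebra.trace (ZMod 2) (GaloisField 2 m)) a b

lemma chi_tr_add (a b : GaloisField 2 m) :
    chi (tr m (a + b)) = chi (tr m a) * chi (tr m b) := by rw [tr_add, chi_add]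

lemma tr_zero : tr m (0 : GaloisField 2 m) = 0 :=
  map_zero (Algebra.trace (ZMod 2) (GaloisField 2 m))

lemma cardF (hm0 : m ≠ 0) : Fintype.card (GaloisField 2 m) = 2 ^ m := by
  rw [← Nat.card_eq_fintype_card]; exact GaloisField.card 2 m hm0

lemma tr_one (hm0 : m ≠ 0) (hmodd : Odd m) : tr m (1 : GaloisField 2 m) = 1 := by
  have h1 : ((1 : GaloisField 2 m)) = algebraMap (ZMod 2) (GaloisField 2 m) 1 := by
    rw [map_one]
  rw [tr, h1, Algebra.trace_algebraMap]
  rw [GaloisField.finrank 2 hm0]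
  obtain ⟨k, hk⟩ := hmodd
  subst hk
  rw [nsmul_eq_mul, mul_one]
  push_cast
  simp [ZMod.natCast_self]
  left
  decide

lemma sum_chi_univ (hm0 : m ≠ 0) (hmodd : Odd m) :
    ∑ u : GaloisField 2 m, chi (tr m u) = 0 := by
  have h : ∑ u : GaloisField 2 m, chi (tr m (u + 1))
      = ∑ u : GaloisField 2 m, chi (tr m u) :=
    Fintype.sum_equiv (Equiv.addRight (1 : GaloisField 2 m)) _ _ (fun u => rfl)
  have h2 : ∀ u : GaloisField 2 m, chi (tr m (u + 1)) = - chi (tr m u) := by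
    intro u
    rw [chi_tr_add, tr_one hm0 hmodd, chi_one]
    ring
  rw [Finset.sum_congr rfl (fun u _ => h2 u), Finset.sum_neg_distrib] at h
  omega

lemma orth (hm0 : m ≠ 0) (hmodd : Odd m) (γ : GaloisField 2 m) (hγ : γ ≠ 0) :
    ∑ x : GaloisField 2 m, chi (tr m (γ * x)) = 0 := by
  have h : ∑ x : GaloisField 2 m, chi (tr m (γ * x))
      = ∑ u : GaloisField 2 m, chi (tr m u) :=
    Fintype.sum_equiv (Equiv.mulLeft₀ γ hγ) _ _ (fun u => rfl)
  rw [h]; exact sum_chi_univ hm0 hmodd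

lemma sum_chi_mul (hm0 : m ≠ 0) (hmodd : Odd m) (z : GaloisField 2 m) :
    ∑ γ : GaloisField 2 m, chi (tr m (γ * z)) = if z = 0 then (2 ^ m : ℤ) else 0 := by
  by_cases hz : z = 0
  · subst hz
    simp only [mul_zero, tr_zero, chi_zero, Finset.sum_const, if_pos]
    rw [Finset.card_univ, cardF hm0]
    push_cast; ring
  · rw [if_neg hz]
    have h : ∀ γ : GaloisField 2 m, chi (tr m (γ * z)) = chi (tr m (z * γ)) := by
      intro γ; rw [mul_comm]
    rw [Finset.sum_congr rfl (fun γ _ => h γ)]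
    exact orth hm0 hmodd z hz

lemma sq_bij : Function.Bijective (fun x : GaloisField 2 m => x ^ 2) := by
  have hinj : Function.Injective (fun x : GaloisField 2 m => x ^ 2) := by
    intro x y h
    simp only at h
    have h2 : (x + y) ^ 2 = 0 := by rw [CharTwo.add_sq, h, CharTwo.add_self_eq_zero]
    have h3 : x + y = 0 := by
      exact pow_eq_zero_iff (n := 2) (by norm_num) |>.mp h2
    have h4 : x = -y := eq_neg_of_add_eq_zero_left h3
    rwa [CharTwo.neg_eq] at h4
  exact Finite.injective_iff_bijective.mp hinj

noncomputable def frobAlg (m : ℕ) : GaloisField 2 m ≃ₐ[ZMod 2] GaloisField 2 m :=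
  AlgEquiv.ofBijective
    { toRingHom := frobenius (GaloisField 2 m) 2
      commutes' := fun c => by
        have : c ^ 2 = c := by revert c; decide
        simp [frobenius_def, ← map_pow, this] }
    (by convert (sq_bij (m := m)) using 1; funext x; exact frobenius_def ..)

lemma tr_algEquiv (σ : GaloisField 2 m ≃ₐ[ZMod 2] GaloisField 2 m)
    (x : GaloisField 2 m) : tr m (σ x) = tr m x := by
  have h1 := trace_eq_sum_automorphisms (K := ZMod 2) (σ x)
  have h2 := trace_eq_sum_automorphisms (K := ZMod 2) x
  have h3 : ∑ τ : GaloisField 2 m ≃ₐ[ZMod 2] GaloisField 2 m, τ (σ x)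
      = ∑ τ : GaloisField 2 m ≃ₐ[ZMod 2] GaloisField 2 m, τ x := by
    refine Fintype.sum_equiv (Equiv.mulRight σ) _ _ (fun τ => ?_)
    rfl
  have h4 := h1.trans (h3.trans h2.symm)
  exact (algebraMap (ZMod 2) (GaloisField 2 m)).injective h4

lemma tr_sq (x : GaloisField 2 m) : tr m (x ^ 2) = tr m x := by
  have := tr_algEquiv (frobAlg m) x
  simpa [frobAlg, frobenius_def] using this

lemma pow_bij (hm3 : 3 ≤ m) (d : ℕ) (hgcd : Nat.gcd d (2 ^ m - 1) = 1) :
    Function.Bijective (fun x : GaloisField 2 m => x ^ d) := by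
  have hm0 : m ≠ 0 := by omega
  have hcard : Fintype.card (GaloisField 2 m) = 2 ^ m := cardF hm0
  have h2m : 8 ≤ 2 ^ m := by
    calc 8 = 2 ^ 3 := by norm_num
    _ ≤ 2 ^ m := Nat.pow_le_pow_right (by norm_num) hm3
  have hd0 : d ≠ 0 := by
    intro h; subst h
    rw [Nat.gcd_zero_left] at hgcd
    omega
  have hinj : Function.Injective (fun x : GaloisField 2 m => x ^ d) := by
    intro x y h
    simp only at h
    by_cases hx : x = 0
    · subst hx
      rw [zero_pow hd0] at h
      exact (pow_eq_zero_iff hd0 |>.mp h.symm).symm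
    by_cases hy : y = 0
    · subst hy
      rw [zero_pow hd0] at h
      exact pow_eq_zero_iff hd0 |>.mp h
    · -- both nonzero
      set u := x * y⁻¹ with hu
      have hu0 : u ≠ 0 := mul_ne_zero hx (inv_ne_zero hy)
      have hud : u ^ d = 1 := by
        rw [hu, mul_pow, h, ← mul_pow, mul_inv_cancel₀ hy, one_pow]
      have huq : u ^ (2 ^ m - 1) = 1 := by
        have := FiniteField.pow_card_sub_one_eq_one u hu0
        rwa [hcard] at this
      have h1 : orderOf u ∣ d := orderOf_dvd_of_pow_eq_one hud
      have h2 : orderOf u ∣ 2 ^ m - 1 := orderOf_dvd_of_pow_eq_one huq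
      have h3 : orderOf u ∣ 1 := hgcd ▸ Nat.dvd_gcd h1 h2
      have h4 : u = 1 := orderOf_eq_one_iff.mp (Nat.eq_one_of_dvd_one h3 ▸ rfl)
      have : x = u * y := by rw [hu, mul_assoc, inv_mul_cancel₀ hy, mul_one]
      rw [this, h4, one_mul]
  exact Finite.injective_iff_bijective.mp hinj

lemma key_double (hm0 : m ≠ 0) (hmodd : Odd m) (g : GaloisField 2 m → GaloisField 2 m)
    (s : GaloisField 2 m) :
    ∑ γ : GaloisField 2 m, ((∑ x : GaloisField 2 m, chi (tr m (γ * x + g x))) *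
        (∑ y : GaloisField 2 m, chi (tr m (γ * y + g y))) * chi (tr m (γ * s)))
      = 2 ^ m * ∑ x : GaloisField 2 m, chi (tr m (g x + g (x + s))) := by
  have hpt : ∀ γ x y : GaloisField 2 m,
      chi (tr m (γ * x + g x)) * chi (tr m (γ * y + g y)) * chi (tr m (γ * s))
        = chi (tr m (g x + g y)) * chi (tr m (γ * (x + y + s))) := by
    intro γ x y
    rw [← chi_tr_add, ← chi_tr_add, ← chi_tr_add]
    congr 1
    ring
  calc
    ∑ γ : GaloisField 2 m, ((∑ x : GaloisField 2 m, chi (tr m (γ * x + g x))) *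
        (∑ y : GaloisField 2 m, chi (tr m (γ * y + g y))) * chi (tr m (γ * s)))
      = ∑ γ : GaloisField 2 m, ∑ x : GaloisField 2 m, ∑ y : GaloisField 2 m,
          chi (tr m (γ * x + g x)) * chi (tr m (γ * y + g y)) * chi (tr m (γ * s)) := by
        refine Finset.sum_congr rfl fun γ _ => ?_
        rw [Finset.sum_mul_sum, Finset.sum_mul]
        refine Finset.sum_congr rfl fun x _ => Finset.sum_mul _ _ _
    _ = ∑ x : GaloisField 2 m, ∑ y : GaloisField 2 m,
          chi (tr m (g x + g y)) * ∑ γ : GaloisField 2 m, chi (tr m (γ * (x + y + s))) := by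
        rw [Finset.sum_comm]
        refine Finset.sum_congr rfl fun x _ => ?_
        rw [Finset.sum_comm]
        refine Finset.sum_congr rfl fun y _ => ?_
        rw [Finset.mul_sum]
        exact Finset.sum_congr rfl fun γ _ => hpt γ x y
    _ = ∑ x : GaloisField 2 m, chi (tr m (g x + g (x + s))) * (2 ^ m : ℤ) := by
        refine Finset.sum_congr rfl fun x _ => ?_
        rw [Finset.sum_eq_single (x + s)]
        · have hz : x + (x + s) + s = 0 := by
            rw [show x + (x + s) + s = x + x + (s + s) by ring, CharTwo.add_self_eq_zero,
              CharTwo.add_self_eq_zero, add_zero]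
          rw [sum_chi_mul hm0 hmodd, if_pos hz]
        · intro y _ hy
          rw [sum_chi_mul hm0 hmodd, if_neg, mul_zero]
          intro hzero
          apply hy
          have : y = -(x + s) := by
            have : x + y + s = y + (x + s) := by ring
            rw [this] at hzero
            exact eq_neg_of_add_eq_zero_left hzero
          rwa [CharTwo.neg_eq] at this
        · intro h; exact absurd (Finset.mem_univ _) h
    _ = 2 ^ m * ∑ x : GaloisField 2 m, chi (tr m (g x + g (x + s))) := by
        rw [Finset.mul_sum]
        exact Finset.sum_congr rfl fun x _ => mul_comm _ _

lemma Wdef (d : ℕ) (γ : GaloisField 2 m) :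
    walsh m d 1 γ = ∑ x : GaloisField 2 m, chi (tr m (γ * x + x ^ d)) := by
  unfold walsh; simp only [one_mul]

lemma sum_chi_pow (hm3 : 3 ≤ m) (hmodd : Odd m) (d : ℕ)
    (hgcd : Nat.gcd d (2 ^ m - 1) = 1) :
    ∑ x : GaloisField 2 m, chi (tr m (x ^ d)) = 0 := by
  have hb := pow_bij hm3 d hgcd
  have h := hb.sum_comp (fun u => chi (tr m u))
  rw [h]
  exact sum_chi_univ (by omega) hmodd

lemma add_ne_zero_of_ne (α β : GaloisField 2 m) (hαβ : α ≠ β) : α + β ≠ 0 := by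
  intro h
  apply hαβ
  have h4 := eq_neg_of_add_eq_zero_left h
  rwa [CharTwo.neg_eq] at h4

lemma expansion (hm3 : 3 ≤ m) (hmodd : Odd m) (d : ℕ)
    (hgcd : Nat.gcd d (2 ^ m - 1) = 1)
    (α β : GaloisField 2 m) (hα : α ≠ 0) (hβ : β ≠ 0) (hαβ : α ≠ β) :
    (8 : ℤ) * ((Hij m α β 0 0 ∩ Dd m d).card : ℤ)
      = 2 ^ m - (walsh m d 1 α + walsh m d 1 β + walsh m d 1 (α + β)) := by
  classical
  have hm0 : m ≠ 0 := by omega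
  have hset : Hij m α β 0 0 ∩ Dd m d
      = Finset.univ.filter
          (fun x => tr m (α * x) = 0 ∧ tr m (β * x) = 0 ∧ tr m (x ^ d) = 1) := by
    ext x
    simp [Hij, Dd, Finset.mem_inter, Finset.mem_filter, and_assoc]
  have hcard : ((Hij m α β 0 0 ∩ Dd m d).card : ℤ)
      = ∑ x : GaloisField 2 m,
          (if tr m (α * x) = 0 ∧ tr m (β * x) = 0 ∧ tr m (x ^ d) = 1 then (1 : ℤ) else 0) := by
    rw [hset, Finset.card_filter]
    push_cast
    rfl
  have hpt : ∀ x : GaloisField 2 m,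
      (8 : ℤ) * (if tr m (α * x) = 0 ∧ tr m (β * x) = 0 ∧ tr m (x ^ d) = 1 then (1 : ℤ) else 0)
      = (1 + chi (tr m (α * x))) * (1 + chi (tr m (β * x))) * (1 - chi (tr m (x ^ d))) := by
    intro x
    rcases zmod2_cases (tr m (α * x)) with h1 | h1 <;>
      rcases zmod2_cases (tr m (β * x)) with h2 | h2 <;>
        rcases zmod2_cases (tr m (x ^ d)) with h3 | h3 <;>
          rw [h1, h2, h3] <;>
            simp [chi_zero, chi_one] <;> norm_num
  have h8 : (8 : ℤ) * ((Hij m α β 0 0 ∩ Dd m d).card : ℤ)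
      = ∑ x : GaloisField 2 m,
          (1 + chi (tr m (α * x))) * (1 + chi (tr m (β * x))) * (1 - chi (tr m (x ^ d))) := by
    rw [hcard, Finset.mul_sum]
    exact Finset.sum_congr rfl fun x _ => hpt x
  have hexp : ∀ x : GaloisField 2 m,
      (1 + chi (tr m (α * x))) * (1 + chi (tr m (β * x))) * (1 - chi (tr m (x ^ d)))
      = 1 + chi (tr m (α * x)) + chi (tr m (β * x)) + chi (tr m ((α + β) * x))
        - chi (tr m (x ^ d)) - chi (tr m (α * x + x ^ d)) - chi (tr m (β * x + x ^ d))
        - chi (tr m ((α + β) * x + x ^ d)) := by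
    intro x
    have hab : chi (tr m ((α + β) * x)) = chi (tr m (α * x)) * chi (tr m (β * x)) := by
      rw [add_mul, chi_tr_add]
    have hac : chi (tr m (α * x + x ^ d)) = chi (tr m (α * x)) * chi (tr m (x ^ d)) :=
      chi_tr_add _ _
    have hbc : chi (tr m (β * x + x ^ d)) = chi (tr m (β * x)) * chi (tr m (x ^ d)) :=
      chi_tr_add _ _
    have habc : chi (tr m ((α + β) * x + x ^ d))
        = chi (tr m (α * x)) * chi (tr m (β * x)) * chi (tr m (x ^ d)) := by
      rw [chi_tr_add, add_mul, chi_tr_add]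
    rw [hab, hac, hbc, habc]
    ring
  rw [Finset.sum_congr rfl fun x _ => hexp x] at h8
  simp only [Finset.sum_add_distrib, Finset.sum_sub_distrib] at h8
  have hs1 : ∑ _x : GaloisField 2 m, (1 : ℤ) = 2 ^ m := by
    rw [Finset.sum_const, Finset.card_univ, cardF hm0]
    push_cast; ring
  have hsA : ∑ x : GaloisField 2 m, chi (tr m (α * x)) = 0 := orth hm0 hmodd α hα
  have hsB : ∑ x : GaloisField 2 m, chi (tr m (β * x)) = 0 := orth hm0 hmodd β hβ
  have hsAB : ∑ x : GaloisField 2 m, chi (tr m ((α + β) * x)) = 0 :=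
    orth hm0 hmodd _ (add_ne_zero_of_ne α β hαβ)
  have hsC : ∑ x : GaloisField 2 m, chi (tr m (x ^ d)) = 0 := sum_chi_pow hm3 hmodd d hgcd
  rw [hs1, hsA, hsB, hsAB, hsC, ← Wdef d α, ← Wdef d β, ← Wdef d (α + β)] at h8
  rw [h8]
  ring

lemma zmod2_add_self (a : ZMod 2) : a + a = 0 := by revert a; decide

/-- Under the hypotheses of the main theorem, `tr(y^d + (y+1)^d + 1) = 0`
for all `y ∈ GF(2^m)`. -/
theorem stmt11 (m : ℕ) (hm3 : 3 ≤ m) (hmodd : Odd m) (d : ℕ)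
    (hgcd : Nat.gcd d (2 ^ m - 1) = 1) (hmax : MaxNonlinear m d)
    (hinter : ∀ α β : GaloisField 2 m, α ≠ 0 → β ≠ 0 → α ≠ β → ∀ i j : ZMod 2,
      ((Hij m α β i j ∩ Dd m d).card : ℤ) ∈
        ({2 ^ (m - 3), 2 ^ (m - 3) - 2 ^ ((m - 3) / 2),
          2 ^ (m - 3) + 2 ^ ((m - 3) / 2)} : Set ℤ)) :
    ∀ y : GaloisField 2 m, tr m (y ^ d + (y + 1) ^ d + 1) = 0 := by
  classical
  obtain ⟨j, hj⟩ : ∃ j, m = 2 * j + 3 := by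
    rw [Nat.odd_iff] at hmodd
    exact ⟨(m - 3) / 2, by omega⟩
  subst hj
  set m := 2 * j + 3 with hm
  have hm0 : m ≠ 0 := by omega
  set c : ℤ := 2 ^ (j + 2) with hc
  have hcpos : (0 : ℤ) < c := by positivity
  -- Walsh values
  have hWvals : ∀ γ : GaloisField 2 m, walsh m d 1 γ = 0 ∨ walsh m d 1 γ = c
      ∨ walsh m d 1 γ = -c := by
    intro γ
    have h := hmax 1 one_ne_zero γ
    simp only [Set.mem_insert_iff, Set.mem_singleton_iff] at h
    have he : (m + 1) / 2 = j + 2 := by omega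
    rw [he] at h
    exact h
  -- W 0 = 0
  have hW0 : walsh m d 1 0 = 0 := by
    rw [Wdef]
    have h : ∀ x : GaloisField 2 m, chi (tr m ((0 : GaloisField 2 m) * x + x ^ d))
        = chi (tr m (x ^ d)) := by
      intro x; rw [zero_mul, zero_add]
    rw [Finset.sum_congr rfl fun x _ => h x]
    exact sum_chi_pow hm3 hmodd d hgcd
  -- W (γ^2) = W γ
  have hWsq : ∀ γ : GaloisField 2 m, walsh m d 1 (γ ^ 2) = walsh m d 1 γ := by
    intro γ
    rw [Wdef, Wdef]
    have h := sq_bij (m := m) |>.sum_comp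
      (fun x : GaloisField 2 m => chi (tr m (γ ^ 2 * x + x ^ d)))
    rw [← h]
    refine Finset.sum_congr rfl fun x _ => ?_
    have harg : γ ^ 2 * x ^ 2 + (x ^ 2) ^ d = (γ * x + x ^ d) ^ 2 := by
      rw [CharTwo.add_sq, mul_pow, ← pow_mul, ← pow_mul, mul_comm d 2]
    rw [harg, tr_sq]
  -- the three-term sums
  have hsum3 : ∀ α β : GaloisField 2 m, α ≠ 0 → β ≠ 0 → α ≠ β →
      walsh m d 1 α + walsh m d 1 β + walsh m d 1 (α + β) = 0 ∨
      walsh m d 1 α + walsh m d 1 β + walsh m d 1 (α + β) = 2 * c ∨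
      walsh m d 1 α + walsh m d 1 β + walsh m d 1 (α + β) = -(2 * c) := by
    intro α β hα hβ hαβ
    have hexp := expansion hm3 hmodd d hgcd α β hα hβ hαβ
    have hin := hinter α β hα hβ hαβ 0 0
    simp only [Set.mem_insert_iff, Set.mem_singleton_iff] at hin
    have he1 : m - 3 = 2 * j := by omega
    have he2 : (m - 3) / 2 = j := by omega
    rw [he2, he1] at hin
    have hpow1 : (2 : ℤ) ^ m = 8 * 2 ^ (2 * j) := by rw [hm]; ring
    have hpow2 : 2 * c = 8 * 2 ^ j := by rw [hc]; ring
    rcases hin with h | h | h <;> rw [h] at hexp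
    · left; linarith
    · right; left; linarith
    · right; right; linarith
  -- W (x^2 + x) = 0
  have hN1 : ∀ x : GaloisField 2 m, walsh m d 1 (x ^ 2 + x) = 0 := by
    intro x
    by_cases hx0 : x = 0
    · subst hx0
      have h00 : (0 : GaloisField 2 m) ^ 2 + 0 = 0 := by norm_num
      rw [h00]; exact hW0
    by_cases hx1 : x = 1
    · subst hx1
      have h11 : (1 : GaloisField 2 m) ^ 2 + 1 = 0 := by
        rw [one_pow]; exact CharTwo.add_self_eq_zero 1
      rw [h11]; exact hW0
    · have hx2 : x ^ 2 ≠ x := by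
        intro h
        apply hx1
        have hmm : x * x = x * 1 := by rw [mul_one, ← sq]; exact h
        exact mul_left_cancel₀ hx0 hmm
      have h3 := hsum3 (x ^ 2) x (pow_ne_zero 2 hx0) hx0 hx2
      rw [hWsq] at h3
      rcases hWvals x with ha | ha | ha <;>
        rcases hWvals (x ^ 2 + x) with hb | hb | hb <;>
          rw [ha, hb] at h3 <;> rw [hb] <;>
            rcases h3 with h3 | h3 | h3 <;> linarith
  -- Artin-Schreier: ker tr = image of x^2 + x
  have hAS : ∀ γ : GaloisField 2 m, tr m γ = 0 → ∃ x, x ^ 2 + x = γ := by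
    have hT0card : 2 * (Finset.univ.filter (fun u : GaloisField 2 m => tr m u = 0)).card
        = 2 ^ m := by
      have hsplit := Finset.card_filter_add_card_filter_not
        (s := (Finset.univ : Finset (GaloisField 2 m))) (p := fun u => tr m u = 0)
      rw [Finset.card_univ, cardF hm0] at hsplit
      have hS := sum_chi_univ hm0 hmodd
      rw [← Finset.sum_filter_add_sum_filter_not Finset.univ (fun u => tr m u = 0)] at hS
      have e0 : ∑ u ∈ Finset.univ.filter (fun u : GaloisField 2 m => tr m u = 0),
          chi (tr m u)
          = ((Finset.univ.filter (fun u : GaloisField 2 m => tr m u = 0)).card : ℤ) := by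
        rw [Finset.sum_congr rfl (fun u hu => by
          rw [(Finset.mem_filter.mp hu).2, chi_zero])]
        rw [Finset.sum_const, nsmul_eq_mul, mul_one]
      have e1 : ∑ u ∈ Finset.univ.filter (fun u : GaloisField 2 m => ¬(tr m u = 0)),
          chi (tr m u)
          = -((Finset.univ.filter (fun u : GaloisField 2 m => ¬(tr m u = 0))).card : ℤ) := by
        rw [Finset.sum_congr rfl (fun u hu =>
          chi_of_ne_zero _ (Finset.mem_filter.mp hu).2)]
        rw [Finset.sum_const, nsmul_eq_mul, mul_neg_one]
      rw [e0, e1] at hS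
      omega
    intro γ hγ
    set ψ := fun x : GaloisField 2 m => x ^ 2 + x with hψ
    have hfib : ∀ b ∈ Finset.univ.image ψ,
        (Finset.univ.filter (fun x => ψ x = b)).card = 2 := by
      intro b hb
      obtain ⟨x₀, _, hx₀⟩ := Finset.mem_image.mp hb
      have hone : (1 : GaloisField 2 m) + 1 = 0 := CharTwo.add_self_eq_zero 1
      have hset2 : Finset.univ.filter (fun x => ψ x = b) = {x₀, x₀ + 1} := by
        ext z
        simp only [Finset.mem_filter, Finset.mem_univ, true_and, Finset.mem_insert,
          Finset.mem_singleton]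
        constructor
        · intro hz
          have hzz : z ^ 2 + z + (x₀ ^ 2 + x₀) = 0 := by
            have : ψ z = ψ x₀ := by rw [hz, hx₀]
            simp only [hψ] at this
            rw [this]; exact CharTwo.add_self_eq_zero _
          have hfact : (z + x₀) * ((z + x₀) + 1) = 0 := by
            have hsq2 : (z + x₀) ^ 2 = z ^ 2 + x₀ ^ 2 := CharTwo.add_sq z x₀
            linear_combination hzz + z * x₀ * hone
          rcases mul_eq_zero.mp hfact with h | h
          · left
            have h4 := eq_neg_of_add_eq_zero_left h
            rwa [CharTwo.neg_eq] at h4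
          · right
            have h4 : z + x₀ = -1 := eq_neg_of_add_eq_zero_left h
            rw [CharTwo.neg_eq] at h4
            linear_combination h4 - x₀ * hone
        · intro hz
          rcases hz with hz | hz <;> subst hz
          · exact hx₀
          · rw [← hx₀]
            simp only [hψ]
            linear_combination (x₀ + 1) * hone
      rw [hset2]
      rw [Finset.card_insert_of_notMem, Finset.card_singleton]
      simp only [Finset.mem_singleton]
      intro h
      have : (0 : GaloisField 2 m) = 1 := by linear_combination h
      exact one_ne_zero this.symm
    have hIcard : 2 * (Finset.univ.image ψ).card = 2 ^ m := by
      have hh := Finset.card_eq_sum_card_image ψ (Finset.univ : Finset (GaloisField 2 m))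
      rw [Finset.card_univ, cardF hm0, Finset.sum_congr rfl hfib, Finset.sum_const,
        smul_eq_mul] at hh
      omega
    have hsub : Finset.univ.image ψ
        ⊆ Finset.univ.filter (fun u : GaloisField 2 m => tr m u = 0) := by
      intro b hb
      obtain ⟨x, _, hx⟩ := Finset.mem_image.mp hb
      rw [Finset.mem_filter]
      refine ⟨Finset.mem_univ _, ?_⟩
      rw [← hx]
      simp only [hψ]
      rw [tr_add, tr_sq]
      exact zmod2_add_self _
    have heq : Finset.univ.image ψ
        = Finset.univ.filter (fun u : GaloisField 2 m => tr m u = 0) :=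
      Finset.eq_of_subset_of_card_le hsub (by omega)
    have hγI : γ ∈ Finset.univ.image ψ := by
      rw [heq, Finset.mem_filter]; exact ⟨Finset.mem_univ _, hγ⟩
    obtain ⟨x, _, hx⟩ := Finset.mem_image.mp hγI
    exact ⟨x, hx⟩
  -- kernel of tr is in the zero set of W
  have hker : ∀ γ : GaloisField 2 m, tr m γ = 0 → walsh m d 1 γ = 0 := by
    intro γ hγ
    obtain ⟨x, hx⟩ := hAS γ hγ
    rw [← hx]; exact hN1 x
  -- Parseval and conclusion
  have hone_int : ((2 : ℤ) ^ m) ≠ 0 := by positivity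
  have hcard_int : ∑ _x : GaloisField 2 m, (1 : ℤ) = 2 ^ m := by
    rw [Finset.sum_const, Finset.card_univ, cardF hm0]
    push_cast; ring
  have hWW0 : ∀ γ : GaloisField 2 m,
      (∑ x : GaloisField 2 m, chi (tr m (γ * x + x ^ d))) *
        (∑ y : GaloisField 2 m, chi (tr m (γ * y + y ^ d))) * chi (tr m (γ * 0))
      = walsh m d 1 γ * walsh m d 1 γ := by
    intro γ
    rw [mul_zero, tr_zero, chi_zero, mul_one, ← Wdef]
  have hKD0 := key_double hm0 hmodd (fun x : GaloisField 2 m => x ^ d) 0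
  simp only [Finset.sum_congr rfl fun γ _ => hWW0 γ] at hKD0
  have hR0 : ∑ x : GaloisField 2 m, chi (tr m (x ^ d + (x + 0) ^ d)) = 2 ^ m := by
    rw [Finset.sum_congr rfl fun x (_ : x ∈ Finset.univ) => by
      rw [add_zero, CharTwo.add_self_eq_zero, tr_zero, chi_zero]]
    exact hcard_int
  have hpars : ∑ γ : GaloisField 2 m, walsh m d 1 γ * walsh m d 1 γ = 2 ^ m * 2 ^ m := by
    rw [hKD0, hR0]
  have hsplitP := Finset.sum_filter_add_sum_filter_not Finset.univ
    (fun γ : GaloisField 2 m => walsh m d 1 γ ≠ 0)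
    (fun γ => walsh m d 1 γ * walsh m d 1 γ)
  have hzP : ∑ γ ∈ Finset.univ.filter
      (fun γ : GaloisField 2 m => ¬(walsh m d 1 γ ≠ 0)),
      walsh m d 1 γ * walsh m d 1 γ = 0 := by
    refine Finset.sum_eq_zero fun γ hγ => ?_
    have h0 : walsh m d 1 γ = 0 := not_not.mp (Finset.mem_filter.mp hγ).2
    rw [h0, mul_zero]
  have hccP : ∀ γ ∈ Finset.univ.filter (fun γ : GaloisField 2 m => walsh m d 1 γ ≠ 0),
      walsh m d 1 γ * walsh m d 1 γ = c * c := by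
    intro γ hγ
    have hne : walsh m d 1 γ ≠ 0 := (Finset.mem_filter.mp hγ).2
    rcases hWvals γ with h | h | h
    · exact absurd h hne
    · rw [h]
    · rw [h]; ring
  have hNZcard : ((Finset.univ.filter
      (fun γ : GaloisField 2 m => walsh m d 1 γ ≠ 0)).card : ℤ) * (c * c)
      = 2 ^ m * 2 ^ m := by
    rw [← hpars, ← hsplitP, hzP, add_zero, Finset.sum_congr rfl hccP,
      Finset.sum_const, nsmul_eq_mul]
  -- the s = 1 identity
  have htr1γ : ∀ γ : GaloisField 2 m, walsh m d 1 γ ≠ 0 → tr m γ = 1 := by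
    intro γ h
    rcases zmod2_cases (tr m γ) with h0 | h0
    · exact absurd (hker γ h0) h
    · exact h0
  have hWW1 : ∀ γ : GaloisField 2 m,
      (∑ x : GaloisField 2 m, chi (tr m (γ * x + x ^ d))) *
        (∑ y : GaloisField 2 m, chi (tr m (γ * y + y ^ d))) * chi (tr m (γ * 1))
      = walsh m d 1 γ * walsh m d 1 γ * chi (tr m γ) := by
    intro γ
    rw [mul_one, ← Wdef]
  have hKD1 := key_double hm0 hmodd (fun x : GaloisField 2 m => x ^ d) 1
  simp only [Finset.sum_congr rfl fun γ _ => hWW1 γ] at hKD1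
  have hsplitQ := Finset.sum_filter_add_sum_filter_not Finset.univ
    (fun γ : GaloisField 2 m => walsh m d 1 γ ≠ 0)
    (fun γ => walsh m d 1 γ * walsh m d 1 γ * chi (tr m γ))
  have hzQ : ∑ γ ∈ Finset.univ.filter
      (fun γ : GaloisField 2 m => ¬(walsh m d 1 γ ≠ 0)),
      walsh m d 1 γ * walsh m d 1 γ * chi (tr m γ) = 0 := by
    refine Finset.sum_eq_zero fun γ hγ => ?_
    have h0 : walsh m d 1 γ = 0 := not_not.mp (Finset.mem_filter.mp hγ).2
    rw [h0, mul_zero, zero_mul]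
  have hccQ : ∀ γ ∈ Finset.univ.filter (fun γ : GaloisField 2 m => walsh m d 1 γ ≠ 0),
      walsh m d 1 γ * walsh m d 1 γ * chi (tr m γ) = -(c * c) := by
    intro γ hγ
    have hne : walsh m d 1 γ ≠ 0 := (Finset.mem_filter.mp hγ).2
    rw [htr1γ γ hne, chi_one, hccP γ hγ]
    ring
  have hLHS1 : ∑ γ : GaloisField 2 m,
      walsh m d 1 γ * walsh m d 1 γ * chi (tr m γ) = -(2 ^ m * 2 ^ m) := by
    rw [← hsplitQ, hzQ, add_zero, Finset.sum_congr rfl hccQ, Finset.sum_const,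
      nsmul_eq_mul]
    rw [mul_neg, hNZcard]
  have hS : ∑ x : GaloisField 2 m, chi (tr m (x ^ d + (x + 1) ^ d)) = -(2 ^ m) := by
    have h := hKD1
    rw [hLHS1] at h
    have h2 : (2 : ℤ) ^ m * ∑ x : GaloisField 2 m, chi (tr m (x ^ d + (x + 1) ^ d))
        = 2 ^ m * (-(2 ^ m)) := by linarith
    exact mul_left_cancel₀ hone_int h2
  have hnn : ∀ x : GaloisField 2 m,
      0 ≤ 1 + chi (tr m (x ^ d + (x + 1) ^ d)) := by
    intro x
    rcases chi_cases (tr m (x ^ d + (x + 1) ^ d)) with h | h <;> rw [h] <;> norm_num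
  have hzero : ∑ x : GaloisField 2 m, (1 + chi (tr m (x ^ d + (x + 1) ^ d))) = 0 := by
    rw [Finset.sum_add_distrib, hcard_int, hS]
    ring
  intro y
  have hy := (Finset.sum_eq_zero_iff_of_nonneg (fun x _ => hnn x)).mp hzero y
    (Finset.mem_univ y)
  have hchi : chi (tr m (y ^ d + (y + 1) ^ d)) = -1 := by linarith
  have htr : tr m (y ^ d + (y + 1) ^ d) = 1 := chi_eq_neg_one _ hchi
  rw [tr_add, htr, tr_one hm0 hmodd]
  decide
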